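/- arXiv:2308.08130 — 2 statements merged into one kernel-verified Lean document; each statement's English description precedes it below -/
import Mathlib

section
/- Let (V, ‖·‖) be a real normed vector space, Z a set, u^H, u^L : Z → V, points z, z_1, …, z_K ∈ Z, and c ∈ ℝ^K. Define the bi-fidelity approximation u^B := Σ_{k=1}^K c_k u^H(z_k). Suppose there exist D ≥ 0 and P ≥ 0 such that ‖u^H(z) − u^L(z)‖ ≤ D, ‖u^H(z_k) − u^L(z_k)‖ ≤ D for all k = 1,…,K, and ‖u^L(z) − Σ_{k=1}^K c_k u^L(z_k)‖ ≤ P. Then ‖u^H(z) − u^B‖ ≤ D + P + √K · ‖c‖₂ · D, where ‖c‖₂ = (Σ_k c_k²)^{1/2}. -/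
/-- Abstract three-term error bound for the bi-fidelity approximation
`u^B = Σ_k c_k u^H(z_k)`: if the high/low fidelity gap is at most `D` at `z`
and at all selected points `z_k`, and the low-fidelity projection error is at
most `P`, then `‖u^H(z) - u^B‖ ≤ D + P + √K ‖c‖₂ D`. -/
theorem bifidelity_error_splitting
    {V : Type*} [NormedAddCommGroup V] [NormedSpace ℝ V]
    {Z : Type*} (uH uL : Z → V) (K : ℕ) (z : Z) (zk : Fin K → Z)
    (c : Fin K → ℝ) (D P : ℝ) (hD : 0 ≤ D) (hP : 0 ≤ P)
    (h1 : ‖uH z - uL z‖ ≤ D)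
    (h2 : ∀ k, ‖uH (zk k) - uL (zk k)‖ ≤ D)
    (h3 : ‖uL z - ∑ k, c k • uL (zk k)‖ ≤ P) :
    ‖uH z - ∑ k, c k • uH (zk k)‖
      ≤ D + P + Real.sqrt K * Real.sqrt (∑ k, c k ^ 2) * D := by
  have hsplit : uH z - ∑ k, c k • uH (zk k)
      = (uH z - uL z) + (uL z - ∑ k, c k • uL (zk k))
        + ∑ k, c k • (uL (zk k) - uH (zk k)) := by
    simp [smul_sub, Finset.sum_sub_distrib]
  have hsum : ‖∑ k, c k • (uL (zk k) - uH (zk k))‖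
      ≤ Real.sqrt K * Real.sqrt (∑ k, c k ^ 2) * D := by
    calc ‖∑ k, c k • (uL (zk k) - uH (zk k))‖
        ≤ ∑ k, ‖c k • (uL (zk k) - uH (zk k))‖ := norm_sum_le _ _
      _ ≤ ∑ k : Fin K, |c k| * D := by
          refine Finset.sum_le_sum fun k _ => ?_
          rw [norm_smul, Real.norm_eq_abs, norm_sub_rev]
          exact mul_le_mul_of_nonneg_left (h2 k) (abs_nonneg _)
      _ = (∑ k : Fin K, |c k|) * D := by rw [Finset.sum_mul]
      _ ≤ (Real.sqrt K * Real.sqrt (∑ k, c k ^ 2)) * D := by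
          refine mul_le_mul_of_nonneg_right ?_ hD
          have h := Finset.sum_mul_sq_le_sq_mul_sq Finset.univ
            (fun _ : Fin K => (1 : ℝ)) (fun k => |c k|)
          simp only [one_mul, one_pow, Finset.sum_const, Finset.card_univ,
            Fintype.card_fin, nsmul_eq_mul, sq_abs] at h
          have h0 : 0 ≤ ∑ k : Fin K, |c k| :=
            Finset.sum_nonneg fun k _ => abs_nonneg _
          calc ∑ k : Fin K, |c k|
              = Real.sqrt ((∑ k : Fin K, |c k|) ^ 2) := (Real.sqrt_sq h0).symm
            _ ≤ Real.sqrt ((K : ℝ) * ∑ k, c k ^ 2) := Real.sqrt_le_sqrt (by linarith)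
            _ = Real.sqrt K * Real.sqrt (∑ k, c k ^ 2) := Real.sqrt_mul (by positivity) _
  calc ‖uH z - ∑ k, c k • uH (zk k)‖
      ≤ ‖uH z - uL z‖ + ‖uL z - ∑ k, c k • uL (zk k)‖
        + ‖∑ k, c k • (uL (zk k) - uH (zk k))‖ := by
        rw [hsplit]; exact norm_add₃_le
    _ ≤ D + P + Real.sqrt K * Real.sqrt (∑ k, c k ^ 2) * D := by
        gcongr
end

section
/- Let C > 0. Let E : [0,∞) → ℝ be continuously differentiable with E(t) ≥ 0 for all t, and let G : [0,∞) → ℝ be continuous with G(t) ≥ 0 for all t. Assume E(0) ≤ 1/(16C²) and that for every t ≥ 0: (1/2)·E′(t) ≤ −(1 − 4C²·E(t) − 1/4)·G(t). Then E(t) ≤ 1/(16C²) for all t ≥ 0, the differential inequality E′(t) + G(t) ≤ 0 holds for all t ≥ 0, and E is non-increasing on [0,∞). -/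
/-- Bootstrap/continuity argument for the energy estimate: if `E` is `C¹` on
`[0,∞)`, nonnegative, `G` is continuous and nonnegative on `[0,∞)`,
`E(0) ≤ 1/(16C²)`, and `(1/2)E' ≤ -(1 - 4C²E - 1/4)G` on `[0,∞)`, then
`E(t) ≤ 1/(16C²)` for all `t ≥ 0`, `E' + G ≤ 0` on `[0,∞)`, and `E` is
non-increasing on `[0,∞)`. -/
theorem energy_bootstrap (C : ℝ) (hC : 0 < C) (E E' G : ℝ → ℝ)
    (hE : ∀ t, 0 ≤ t → HasDerivWithinAt E (E' t) (Set.Ici 0) t)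
    (hE'cont : ContinuousOn E' (Set.Ici 0))
    (hEnonneg : ∀ t, 0 ≤ t → 0 ≤ E t)
    (hGcont : ContinuousOn G (Set.Ici 0))
    (hGnonneg : ∀ t, 0 ≤ t → 0 ≤ G t)
    (hE0 : E 0 ≤ 1 / (16 * C ^ 2))
    (hineq : ∀ t, 0 ≤ t → (1 / 2) * E' t ≤ -(1 - 4 * C ^ 2 * E t - 1 / 4) * G t) :
    (∀ t, 0 ≤ t → E t ≤ 1 / (16 * C ^ 2)) ∧
    (∀ t, 0 ≤ t → E' t + G t ≤ 0) ∧
    (∀ s t, 0 ≤ s → s ≤ t → E t ≤ E s) := by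
  have hC2 : (0:ℝ) < C ^ 2 := by positivity
  set c1 : ℝ := 1 / (16 * C ^ 2) with hc1
  have hc1pos : 0 < c1 := by positivity
  have hEcont : ContinuousOn E (Set.Ici 0) := fun t ht => (hE t ht).continuousWithinAt
  -- key: if E t ≤ 2 c1 then E' t ≤ 0
  have hkey : ∀ t, 0 ≤ t → E t ≤ 2 * c1 → E' t ≤ 0 := by
    intro t ht hEt
    have h1 := hineq t ht
    have hG := hGnonneg t ht
    have h2 : E t ≤ 1 / (8 * C ^ 2) := by
      have heq : 2 * (1 / (16 * C ^ 2)) = 1 / (8 * C ^ 2) := by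
        field_simp; ring
      rw [hc1] at hEt; linarith [hEt]
    have h3 : 8 * C ^ 2 * E t ≤ 1 := by
      have := (le_div_iff₀ (by positivity : (0:ℝ) < 8 * C ^ 2)).mp
        (by linarith : E t ≤ 1 / (8 * C ^ 2))
      linarith [this]
    have hfac : (0:ℝ) ≤ 1 - 4 * C ^ 2 * E t - 1 / 4 := by nlinarith
    have := mul_nonneg hfac hG
    nlinarith
  -- main claim: E t ≤ 2 c1 for all t ≥ 0
  have hmain : ∀ t, 0 ≤ t → E t ≤ 2 * c1 := by
    by_contra h
    push_neg at h
    obtain ⟨t0, ht0, ht0'⟩ := h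
    set A : Set ℝ := {t | 0 ≤ t ∧ 2 * c1 < E t} with hA
    have hAne : A.Nonempty := ⟨t0, ht0, ht0'⟩
    have hAbdd : BddBelow A := ⟨0, fun x hx => hx.1⟩
    set T : ℝ := sInf A with hT
    have hT0 : 0 ≤ T := le_csInf hAne (fun x hx => hx.1)
    -- for s in [0, T), E s ≤ 2 c1
    have hbelow : ∀ s, 0 ≤ s → s < T → E s ≤ 2 * c1 := by
      intro s hs hsT
      by_contra hs'
      push_neg at hs'
      exact absurd (csInf_le hAbdd ⟨hs, hs'⟩) (not_le.mpr hsT)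
    -- E is antitone on [0, T]
    have hanti : AntitoneOn E (Set.Icc 0 T) := by
      apply antitoneOn_of_deriv_nonpos (convex_Icc 0 T)
        (hEcont.mono (Set.Icc_subset_Ici_self))
      · intro x hx
        rw [interior_Icc] at hx
        exact ((hE x hx.1.le).hasDerivAt
          (Ici_mem_nhds hx.1)).differentiableAt.differentiableWithinAt
      · intro x hx
        rw [interior_Icc] at hx
        have hdx : HasDerivAt E (E' x) x := (hE x hx.1.le).hasDerivAt (Ici_mem_nhds hx.1)
        rw [hdx.deriv]
        exact hkey x hx.1.le (hbelow x hx.1.le hx.2)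
    -- hence E T ≤ c1 < 2 c1
    have hET : E T ≤ c1 := by
      calc E T ≤ E 0 := hanti ⟨le_refl 0, hT0⟩ ⟨hT0, le_refl T⟩ hT0
        _ ≤ c1 := hE0
    -- continuity of E within Ici 0 at T: E < 2 c1 nearby
    have hcontT : ContinuousWithinAt E (Set.Ici 0) T := hEcont T hT0
    have hnear : ∀ᶠ s in nhdsWithin T (Set.Ici 0), E s < 2 * c1 :=
      hcontT.eventually_lt continuousWithinAt_const (by show E T < 2 * c1; linarith)
    rw [eventually_nhdsWithin_iff] at hnear
    obtain ⟨δ, hδpos, hδ⟩ := Metric.eventually_nhds_iff.mp hnear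
    obtain ⟨a, haA, haδ⟩ := Real.lt_sInf_add_pos hAne hδpos
    have haT : T ≤ a := csInf_le hAbdd haA
    have : E a < 2 * c1 := by
      apply hδ (show dist a T < δ by
        rw [Real.dist_eq, abs_of_nonneg (by linarith)]; linarith) haA.1
    exact absurd haA.2 (not_lt.mpr this.le)
  -- From hmain: E' ≤ 0 on Ici 0, so E is antitone on Ici 0
  have hanti : AntitoneOn E (Set.Ici 0) := by
    apply antitoneOn_of_deriv_nonpos (convex_Ici 0) hEcont
    · intro x hx
      rw [interior_Ici] at hx
      exact ((hE x hx.le).hasDerivAt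
        (Ici_mem_nhds hx)).differentiableAt.differentiableWithinAt
    · intro x hx
      rw [interior_Ici] at hx
      have hdx : HasDerivAt E (E' x) x := (hE x hx.le).hasDerivAt (Ici_mem_nhds hx)
      rw [hdx.deriv]
      exact hkey x hx.le (hmain x hx.le)
  have hbound : ∀ t, 0 ≤ t → E t ≤ c1 := fun t ht =>
    le_trans (hanti (Set.self_mem_Ici) ht ht) hE0
  refine ⟨hbound, ?_, fun s t hs hst => hanti hs (hs.trans hst) hst⟩
  intro t ht
  have h1 := hineq t ht
  have hG := hGnonneg t ht
  have hEt := hbound t ht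
  have h3 : 16 * C ^ 2 * E t ≤ 1 := by
    have := (le_div_iff₀ (by positivity : (0:ℝ) < 16 * C ^ 2)).mp hEt
    linarith [this]
  have hfac : (0:ℝ) ≤ 1 - 4 * C ^ 2 * E t - 1 / 4 - 1 / 2 := by nlinarith
  have := mul_nonneg hfac hG
  nlinarith
end
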